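/- Assume the Rotation Lemma: for every tree language L recognized by a deterministic tree-walking automaton over an alphabet containing a binary letter a and a nullary letter c, there exists a 2-ary term t over {a,c} with t(t(*,*),*) L-equivalent to t(*,t(*,*)); assume also every such L is a regular tree language. Then: if the Kopczyński obfuscations kop(G) and kop(H) of two context-free grammars G, H with terminals Γ can be separated by a language recognized by a deterministic tree-walking automaton, the word languages L(G) and L(H) can be separated by a regular word language. -/

import Mathlib

inductive Term (σ : Type) : Type
  | port : Term σ
  | node : σ → List (Term σ) → Term σ

namespace Term

variable {σ : Type}

def ports : Term σ → ℕ
  | .port => 1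
  | .node _ ts => (ts.attach.map fun x => ports x.1).sum
decreasing_by
  simp_wf
  have := List.sizeOf_lt_of_mem x.2
  omega

def size : Term σ → ℕ
  | .port => 1
  | .node _ ts => 1 + (ts.attach.map fun x => size x.1).sum
decreasing_by
  simp_wf
  have := List.sizeOf_lt_of_mem x.2
  omega

def WF (ar : σ → ℕ) : Term σ → Prop
  | .port => True
  | .node a ts => ts.length = ar a ∧ ∀ t ∈ ts.attach, WF ar t.1
decreasing_by
  simp_wf
  have := List.sizeOf_lt_of_mem t.2
  omega

mutual
def subst1 : Term σ → List (Term σ) → Term σ × List (Term σ)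
  | .port, l => (l.headD .port, l.tail)
  | .node a ts, l => let p := substL ts l; (.node a p.1, p.2)
def substL : List (Term σ) → List (Term σ) → List (Term σ) × List (Term σ)
  | [], l => ([], l)
  | t :: ts, l => let p := subst1 t l; let q := substL ts p.2; (p.1 :: q.1, q.2)
end

/-- Substitute the terms `l` for the ports of `t`, in left-to-right order. -/
def subst (t : Term σ) (l : List (Term σ)) : Term σ := (subst1 t l).1

def eval {Q : Type} (δ : σ → List Q → Q) (q0 : Q) : Term σ → Q
  | .port => q0
  | .node a ts => δ a (ts.attach.map fun x => eval δ q0 x.1)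
decreasing_by
  simp_wf
  have := List.sizeOf_lt_of_mem x.2
  omega

end Term

inductive TStar {σ : Type} (t : Term σ) : Term σ → Prop
  | base : TStar t Term.port
  | step {u v : Term σ} : TStar t u → TStar t v → TStar t (t.subst [u, v])

def LEquiv {σ : Type} (ar : σ → ℕ) (L : Set (Term σ)) (n : ℕ) (u u' : Term σ) : Prop :=
  u.ports = n ∧ u'.ports = n ∧
  ∀ s : Term σ, s.ports = 1 → s.WF ar →
    ∀ l : List (Term σ), l.length = n → (∀ x ∈ l, x.ports = 0 ∧ x.WF ar) →
      (s.subst [u.subst l] ∈ L ↔ s.subst [u'.subst l] ∈ L)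

def RegularTree {σ : Type} (ar : σ → ℕ) (L : Set (Term σ)) : Prop :=
  ∃ (Q : Type) (_ : Finite Q) (δ : σ → List Q → Q) (q0 : Q) (F : Set Q),
    L = {u | u.ports = 0 ∧ u.WF ar ∧ u.eval δ q0 ∈ F}

def RegularWord {Γ : Type} (K : Set (List Γ)) : Prop :=
  ∃ (Q : Type) (_ : Fintype Q) (M : DFA Γ Q), K = M.accepts

/-- A context-free grammar in Chomsky normal form: rules `A → B C` and `A → σ`. -/
structure CNF (Γ N : Type) where
  start : N
  rule2 : N → N → N → Prop
  rule1 : N → Γ → Prop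

/-- Derivation trees: internal nodes labeled by nonterminals, leaves by terminals. -/
inductive DTree (Γ N : Type) : Type
  | leaf : Γ → DTree Γ N
  | node : N → DTree Γ N → DTree Γ N → DTree Γ N

def DTree.yield {Γ N : Type} : DTree Γ N → List Γ
  | .leaf a => [a]
  | .node _ l r => l.yield ++ r.yield

/-- `IsDeriv G d A`: `d` is a derivation tree of `G` from nonterminal `A`. -/
def IsDeriv {Γ N : Type} (G : CNF Γ N) : DTree Γ N → N → Prop
  | .leaf a, A => G.rule1 A a
  | .node B l r, A => B = A ∧ ∃ C D, G.rule2 A C D ∧ IsDeriv G l C ∧ IsDeriv G r D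

/-- The word language generated by `G`. -/
def CNF.lang {Γ N : Type} (G : CNF Γ N) : Set (List Γ) :=
  {w | ∃ d : DTree Γ N, IsDeriv G d G.start ∧ d.yield = w}

/-- The ranked alphabet `Γ ∪ {a, c}`: `Sum.inr true` is the binary letter `a`,
`Sum.inr false` is the nullary letter `c`, and letters of `Γ` have arity 0. -/
abbrev KLetter (Γ : Type) := Γ ⊕ Bool

def arK {Γ : Type} : KLetter Γ → ℕ
  | .inr true => 2
  | _ => 0

/-- All labels of the term are among `{a, c}`. -/
def OnlyAC {Γ : Type} : Term (KLetter Γ) → Prop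
  | .port => True
  | .node x ts => (∃ b : Bool, x = .inr b) ∧ ∀ u ∈ ts.attach, OnlyAC u.1
decreasing_by
  simp_wf
  have := List.sizeOf_lt_of_mem u.2
  omega

def leafT {Γ : Type} (g : Γ) : Term (KLetter Γ) := .node (.inl g) []

/-- `KopD d u`: `u` is obtained from the derivation tree `d` by replacing each
nonterminal occurrence by some 2-ary term over `{a, c}`. -/
inductive KopD {Γ N : Type} : DTree Γ N → Term (KLetter Γ) → Prop
  | leaf (g : Γ) : KopD (.leaf g) (leafT g)
  | node (A : N) (l r : DTree Γ N) (s u v : Term (KLetter Γ)) :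
      s.ports = 2 → s.WF arK → OnlyAC s → KopD l u → KopD r v →
      KopD (.node A l r) (s.subst [u, v])

/-- The Kopczyński obfuscation of `G`. -/
def kopLang {Γ N : Type} (G : CNF Γ N) : Set (Term (KLetter Γ)) :=
  {u | ∃ d : DTree Γ N, IsDeriv G d G.start ∧ KopD d u}

/-- The left-to-right word of `Γ`-labeled leaves of a tree over `Γ ∪ {a,c}`. -/
def gyield {Γ : Type} : Term (KLetter Γ) → List Γ
  | .port => []
  | .node (.inl g) _ => [g]
  | .node (.inr _) ts => (ts.attach.map fun x => gyield x.1).flatten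
decreasing_by
  simp_wf
  have := List.sizeOf_lt_of_mem x.2
  omega


namespace Term
variable {σ : Type}

def sumP (l : List (Term σ)) : ℕ := (l.map ports).sum

@[simp] theorem ports_port : (Term.port : Term σ).ports = 1 := by simp [ports]

@[simp] theorem ports_node (a : σ) (ts : List (Term σ)) :
    (Term.node a ts).ports = sumP ts := by
  rw [ports]; simp [sumP, List.attach_map_val]

@[simp] theorem WF_port (ar : σ → ℕ) : (Term.port : Term σ).WF ar := by simp [WF]

theorem WF_node (ar : σ → ℕ) (a : σ) (ts : List (Term σ)) :
    (Term.node a ts).WF ar ↔ ts.length = ar a ∧ ∀ t ∈ ts, WF ar t := by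
  rw [WF]; simp

@[simp] theorem sumP_nil : sumP ([] : List (Term σ)) = 0 := rfl
@[simp] theorem sumP_cons (t : Term σ) (l) : sumP (t :: l) = t.ports + sumP l := by
  simp [sumP]
@[simp] theorem sumP_append (l1 l2 : List (Term σ)) : sumP (l1 ++ l2) = sumP l1 + sumP l2 := by
  simp [sumP]

mutual
theorem subst1_snd (t : Term σ) (l : List (Term σ)) :
    (subst1 t l).2 = l.drop t.ports := by
  match t with
  | .port => simp [subst1, List.drop_one]
  | .node a ts => simp [subst1, substL_snd ts l]
theorem substL_snd (ts : List (Term σ)) (l : List (Term σ)) :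
    (substL ts l).2 = l.drop (sumP ts) := by
  match ts with
  | [] => simp [substL]
  | t :: ts' =>
    simp only [substL, subst1_snd t l, substL_snd ts' (l.drop t.ports), sumP_cons,
      List.drop_drop]
    try rw [Nat.add_comm]
end

theorem substL_fst_length (ts : List (Term σ)) (l : List (Term σ)) :
    (substL ts l).1.length = ts.length := by
  induction ts generalizing l with
  | nil => simp [substL]
  | cons t ts ih => simp [substL, ih]

mutual
theorem subst1_take (t : Term σ) (l : List (Term σ)) :
    (subst1 t (l.take t.ports)).1 = (subst1 t l).1 := by
  match t with
  | .port => cases l <;> simp [subst1]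
  | .node a ts => simp [subst1, substL_take ts l]
theorem substL_take (ts : List (Term σ)) (l : List (Term σ)) :
    (substL ts (l.take (sumP ts))).1 = (substL ts l).1 := by
  match ts with
  | [] => simp [substL]
  | t :: ts' =>
    simp only [substL, sumP_cons]
    have e : (l.take (t.ports + sumP ts')).take t.ports = l.take t.ports := by
      rw [List.take_take, Nat.min_eq_left (by omega)]
    have h1 : (subst1 t (l.take (t.ports + sumP ts'))).1 = (subst1 t l).1 := by
      rw [← subst1_take t (l.take (t.ports + sumP ts')), e, subst1_take]
    rw [h1]
    have h2 : (subst1 t (l.take (t.ports + sumP ts'))).2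
        = (l.drop t.ports).take (sumP ts') := by
      rw [subst1_snd, ← List.take_drop]
    rw [h2, subst1_snd, substL_take ts' (l.drop t.ports)]
end

mutual
theorem subst1_ports (t : Term σ) (l : List (Term σ)) :
    ((subst1 t l).1).ports = sumP (l.take t.ports) + (t.ports - l.length) := by
  match t with
  | .port => cases l <;> simp [subst1]
  | .node a ts => simp [subst1, substL_ports ts l]
theorem substL_ports (ts : List (Term σ)) (l : List (Term σ)) :
    sumP (substL ts l).1 = sumP (l.take (sumP ts)) + (sumP ts - l.length) := by
  match ts with
  | [] => simp [substL]
  | t :: ts' =>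
    simp only [substL, sumP_cons, subst1_ports t l, subst1_snd,
      substL_ports ts' (l.drop t.ports)]
    have e : l.take (t.ports + sumP ts')
        = l.take t.ports ++ (l.drop t.ports).take (sumP ts') := by
      rw [List.take_add]
    rw [e, sumP_append]
    have : (l.drop t.ports).length = l.length - t.ports := List.length_drop
    have h1 : (l.take t.ports).length = min t.ports l.length := List.length_take ..
    omega
end

mutual
theorem subst1_wf (ar : σ → ℕ) (t : Term σ) (l : List (Term σ)) (ht : t.WF ar)
    (hl : ∀ x ∈ l, x.WF ar) : ((subst1 t l).1).WF ar := by
  match t with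
  | .port =>
    cases l with
    | nil => simpa [subst1] using ht
    | cons x l => exact hl x (by simp)
  | .node a ts =>
    rw [WF_node] at ht
    simp only [subst1]
    rw [WF_node]
    refine ⟨by rw [substL_fst_length]; exact ht.1, ?_⟩
    exact substL_wf ar ts l (fun x hx => ht.2 x hx) hl
theorem substL_wf (ar : σ → ℕ) (ts : List (Term σ)) (l : List (Term σ))
    (hts : ∀ x ∈ ts, x.WF ar) (hl : ∀ x ∈ l, x.WF ar) :
    ∀ x ∈ (substL ts l).1, x.WF ar := by
  match ts with
  | [] => simp [substL]
  | t :: ts' =>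
    simp only [substL, List.mem_cons]
    rintro x (rfl | hx)
    · exact subst1_wf ar t l (hts t (by simp)) hl
    · refine substL_wf ar ts' _ (fun y hy => hts y (by simp [hy])) ?_ x hx
      rw [subst1_snd]
      exact fun y hy => hl y (List.mem_of_mem_drop hy)
end

theorem substL_append (l1 l2 : List (Term σ)) (m : List (Term σ)) :
    substL (l1 ++ l2) m
      = ((substL l1 m).1 ++ (substL l2 (substL l1 m).2).1, (substL l2 (substL l1 m).2).2) := by
  induction l1 generalizing m with
  | nil => simp [substL]
  | cons t l1 ih => simp [substL, ih]

mutual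
theorem subst1_comp (t : Term σ) (l m : List (Term σ)) (h : t.ports ≤ l.length) :
    (subst1 (subst1 t l).1 m).1 = (subst1 t (substL l m).1).1 := by
  match t with
  | .port =>
    match l with
    | [] => simp at h
    | x :: l' => simp [subst1, substL]
  | .node a ts =>
    simp only [subst1]
    rw [substL_comp ts l m (by simpa using h)]
theorem substL_comp (ts : List (Term σ)) (l m : List (Term σ)) (h : sumP ts ≤ l.length) :
    (substL (substL ts l).1 m).1 = (substL ts (substL l m).1).1 := by
  match ts with
  | [] => simp [substL]
  | t :: ts' =>
    have hlen : (l.drop t.ports).length = l.length - t.ports := List.length_drop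
    have hts : t.ports ≤ l.length := by simp at h; omega
    simp only [substL, subst1_snd]
    rw [subst1_comp t l m hts]
    have hrem : ((subst1 t l).1).ports = sumP (l.take t.ports) := by
      rw [subst1_ports]
      omega
    rw [hrem]
    have hsplit : (substL l m).1
        = (substL (l.take t.ports) m).1 ++ (substL (l.drop t.ports) (m.drop (sumP (l.take t.ports)))).1 := by
      conv_lhs => rw [← List.take_append_drop t.ports l]
      rw [substL_append, substL_snd]
    have hdrop : ((substL l m).1).drop t.ports
        = (substL (l.drop t.ports) (m.drop (sumP (l.take t.ports)))).1 := by
      rw [hsplit, List.drop_left' (by rw [substL_fst_length, List.length_take]; omega)]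
    rw [substL_comp ts' (l.drop t.ports) (m.drop (sumP (l.take t.ports))) (by simp at h ⊢; omega),
      ← hdrop]
end

/-! ### Corollaries for `subst` -/

mutual
theorem subst1_nil (t : Term σ) : (subst1 t []).1 = t := by
  match t with
  | .port => rfl
  | .node a ts => simp only [subst1]; rw [substL_nil ts]
theorem substL_nil (ts : List (Term σ)) : (substL ts []).1 = ts := by
  match ts with
  | [] => rfl
  | t :: ts' =>
    simp only [substL, subst1_snd, List.drop_nil]
    rw [subst1_nil t, substL_nil ts']
end

@[simp] theorem subst_nil (t : Term σ) : t.subst [] = t := subst1_nil t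

theorem subst_take (t : Term σ) (l : List (Term σ)) :
    t.subst (l.take t.ports) = t.subst l := by
  unfold subst; exact subst1_take t l

@[simp] theorem subst_port (l : List (Term σ)) : (Term.port : Term σ).subst l = l.headD .port := rfl

theorem ports_subst (t : Term σ) (l : List (Term σ)) :
    (t.subst l).ports = sumP (l.take t.ports) + (t.ports - l.length) := subst1_ports t l

theorem wf_subst {ar : σ → ℕ} {t : Term σ} {l : List (Term σ)} (ht : t.WF ar)
    (hl : ∀ x ∈ l, x.WF ar) : (t.subst l).WF ar := subst1_wf ar t l ht hl

theorem subst_closed {t : Term σ} (h : t.ports = 0) (l : List (Term σ)) : t.subst l = t := by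
  conv_lhs => rw [← subst_take, h, List.take_zero, subst_nil]

theorem ports_subst_exact {t : Term σ} {l : List (Term σ)} (h : t.ports = l.length)
    (hl : ∀ x ∈ l, x.ports = 0) : (t.subst l).ports = 0 := by
  rw [ports_subst, h, List.take_length]
  have : sumP l = 0 := by
    simp only [sumP, List.sum_eq_zero_iff]
    intro n hn
    simp only [List.mem_map] at hn
    obtain ⟨x, hx, rfl⟩ := hn
    exact hl x hx
  omega

theorem subst_pair {t : Term σ} (ht : t.ports ≤ 2) (u v : Term σ) (l : List (Term σ)) :
    (t.subst [u, v]).subst l = t.subst [u.subst l, v.subst (l.drop u.ports)] := by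
  unfold subst
  rw [subst1_comp t [u, v] l (by simpa using ht)]
  simp [substL, subst1_snd]

theorem subst_single {s : Term σ} (hs : s.ports ≤ 1) (x : Term σ) (m : List (Term σ)) :
    (s.subst [x]).subst m = s.subst [x.subst m] := by
  unfold subst
  rw [subst1_comp s [x] m (by simpa using hs)]
  simp [substL]

end Term

namespace Sep
open Term

variable {σ : Type} {ar : σ → ℕ} {L : Set (Term σ)} {t : Term σ}

theorem lequiv_refl {n : ℕ} {u : Term σ} (h : u.ports = n) : LEquiv ar L n u u :=
  ⟨h, h, fun _ _ _ _ _ _ => Iff.rfl⟩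

theorem lequiv_symm {n : ℕ} {u u' : Term σ} (h : LEquiv ar L n u u') : LEquiv ar L n u' u :=
  ⟨h.2.1, h.1, fun s hs hw l hl hx => (h.2.2 s hs hw l hl hx).symm⟩

theorem lequiv_trans {n : ℕ} {u v w : Term σ} (h1 : LEquiv ar L n u v) (h2 : LEquiv ar L n v w) :
    LEquiv ar L n u w :=
  ⟨h1.1, h2.2.1, fun s hs hwf l hl hx => (h1.2.2 s hs hwf l hl hx).trans (h2.2.2 s hs hwf l hl hx)⟩

theorem lequiv_cast {n m : ℕ} {u u' : Term σ} (h : n = m) (he : LEquiv ar L n u u') :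
    LEquiv ar L m u u' := h ▸ he

theorem ports_pair (ht2 : t.ports = 2) (u v : Term σ) :
    (t.subst [u, v]).ports = u.ports + v.ports := by
  rw [ports_subst, ht2]; simp

theorem sumP_zero {l : List (Term σ)} (hl : ∀ x ∈ l, x.ports = 0) : sumP l = 0 := by
  simp only [sumP, List.sum_eq_zero_iff]
  intro n hn
  simp only [List.mem_map] at hn
  obtain ⟨x, hx, rfl⟩ := hn
  exact hl x hx

theorem ports_subst_zero {w : Term σ} {l : List (Term σ)} (h : w.ports ≤ l.length)
    (hl : ∀ x ∈ l, x.ports = 0) : (w.subst l).ports = 0 := by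
  rw [ports_subst]
  have : sumP (l.take w.ports) = 0 := sumP_zero fun x hx => hl x (List.mem_of_mem_take hx)
  omega

theorem lequiv_cong_left (ht2 : t.ports = 2) (htWF : t.WF ar) {n : ℕ} {u u' v : Term σ}
    (h : LEquiv ar L n u u') (hv : v.WF ar) :
    LEquiv ar L (n + v.ports) (t.subst [u, v]) (t.subst [u', v]) := by
  obtain ⟨hu, hu', hiff⟩ := h
  refine ⟨by rw [ports_pair ht2, hu], by rw [ports_pair ht2, hu'], ?_⟩
  intro s hs hsWF l hlen hl
  have hl2len : (l.drop n).length = v.ports := by rw [List.length_drop]; omega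
  have hcl2 : ∀ x ∈ l.drop n, x.ports = 0 ∧ x.WF ar := fun x hx => hl x (List.mem_of_mem_drop hx)
  have hclosed2 : (v.subst (l.drop n)).ports = 0 :=
    ports_subst_zero (by omega) (fun x hx => (hcl2 x hx).1)
  have hwf2 : (v.subst (l.drop n)).WF ar := wf_subst hv (fun x hx => (hcl2 x hx).2)
  set s' := s.subst [t.subst [Term.port, v.subst (l.drop n)]] with hs'
  have hinner : (t.subst [Term.port, v.subst (l.drop n)]).ports = 1 := by
    rw [ports_pair ht2, hclosed2, ports_port]
  have hs'p : s'.ports = 1 := by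
    rw [hs', ports_subst, hs]; simp [hinner, sumP]
  have hs'wf : s'.WF ar := by
    refine wf_subst hsWF ?_
    rintro x hx
    simp only [List.mem_singleton] at hx
    subst hx
    refine wf_subst htWF ?_
    rintro x hx
    simp only [List.mem_cons, List.mem_singleton, List.not_mem_nil, or_false] at hx
    rcases hx with rfl | rfl
    · exact WF_port ar
    · exact hwf2
  have key : ∀ X : Term σ, s'.subst [X] = s.subst [t.subst [X, v.subst (l.drop n)]] := by
    intro X
    rw [hs', subst_single (le_of_eq hs), subst_pair (le_of_eq ht2)]
    simp [hclosed2]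
  have expand : ∀ w : Term σ, w.ports = n →
      (t.subst [w, v]).subst l = t.subst [w.subst (l.take n), v.subst (l.drop n)] := by
    intro w hw
    rw [subst_pair (le_of_eq ht2), hw, ← subst_take w l, hw]
  rw [expand u hu, expand u' hu', ← key, ← key]
  exact hiff s' hs'p hs'wf (l.take n) (by rw [List.length_take]; omega)
    (fun x hx => hl x (List.mem_of_mem_take hx))

theorem lequiv_cong_right (ht2 : t.ports = 2) (htWF : t.WF ar) {n m : ℕ} {u v v' : Term σ}
    (hu : u.WF ar) (hup : u.ports = n) (h : LEquiv ar L m v v') :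
    LEquiv ar L (n + m) (t.subst [u, v]) (t.subst [u, v']) := by
  obtain ⟨hv, hv', hiff⟩ := h
  refine ⟨by rw [ports_pair ht2, hup, hv], by rw [ports_pair ht2, hup, hv'], ?_⟩
  intro s hs hsWF l hlen hl
  have hcl1 : ∀ x ∈ l.take n, x.ports = 0 ∧ x.WF ar := fun x hx => hl x (List.mem_of_mem_take hx)
  have hclosed1 : (u.subst (l.take n)).ports = 0 :=
    ports_subst_zero (by rw [List.length_take]; omega) (fun x hx => (hcl1 x hx).1)
  have hwf1 : (u.subst (l.take n)).WF ar := wf_subst hu (fun x hx => (hcl1 x hx).2)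
  set s' := s.subst [t.subst [u.subst (l.take n), Term.port]] with hs'
  have hinner : (t.subst [u.subst (l.take n), Term.port]).ports = 1 := by
    rw [ports_pair ht2, hclosed1, ports_port]
  have hs'p : s'.ports = 1 := by
    rw [hs', ports_subst, hs]; simp [hinner, sumP]
  have hs'wf : s'.WF ar := by
    refine wf_subst hsWF ?_
    rintro x hx
    simp only [List.mem_singleton] at hx
    subst hx
    refine wf_subst htWF ?_
    rintro x hx
    simp only [List.mem_cons, List.mem_singleton, List.not_mem_nil, or_false] at hx
    rcases hx with rfl | rfl
    · exact hwf1
    · exact WF_port ar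
  have key : ∀ X : Term σ, s'.subst [X] = s.subst [t.subst [u.subst (l.take n), X]] := by
    intro X
    rw [hs', subst_single (le_of_eq hs), subst_pair (le_of_eq ht2), hclosed1,
      subst_closed hclosed1]
    simp
  have expand : ∀ w : Term σ, (t.subst [u, w]).subst l
      = t.subst [u.subst (l.take n), w.subst (l.drop n)] := by
    intro w
    rw [subst_pair (le_of_eq ht2), hup, ← subst_take u l, hup]
  rw [expand v, expand v', ← key, ← key]
  exact hiff s' hs'p hs'wf (l.drop n) (by rw [List.length_drop]; omega)
    (fun x hx => hl x (List.mem_of_mem_drop hx))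

theorem expand_left (ht2 : t.ports = 2) (x y z : Term σ) :
    (t.subst [t, Term.port]).subst [x, y, z] = t.subst [t.subst [x, y], z] := by
  rw [subst_pair (le_of_eq ht2), ht2]
  have : t.subst [x, y, z] = t.subst [x, y] := by
    rw [← subst_take t [x, y, z], ht2]; rfl
  rw [this]; rfl

theorem expand_right (ht2 : t.ports = 2) (x y z : Term σ) :
    (t.subst [Term.port, t]).subst [x, y, z] = t.subst [x, t.subst [y, z]] := by
  rw [subst_pair (le_of_eq ht2)]
  simp

theorem rot3 (hrot : LEquiv ar L 3 (t.subst [t, Term.port]) (t.subst [Term.port, t]))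
    (ht2 : t.ports = 2) {x y z : Term σ}
    (hx : x.ports = 0 ∧ x.WF ar) (hy : y.ports = 0 ∧ y.WF ar) (hz : z.ports = 0 ∧ z.WF ar)
    {s : Term σ} (hs : s.ports = 1) (hsWF : s.WF ar) :
    s.subst [t.subst [t.subst [x, y], z]] ∈ L ↔ s.subst [t.subst [x, t.subst [y, z]]] ∈ L := by
  have := hrot.2.2 s hs hsWF [x, y, z] rfl (by
    rintro w hw
    simp only [List.mem_cons, List.mem_singleton, List.not_mem_nil, or_false] at hw
    rcases hw with rfl | rfl | rfl
    exacts [hx, hy, hz])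
  rwa [expand_left ht2, expand_right ht2] at this

theorem rot_open (hrot : LEquiv ar L 3 (t.subst [t, Term.port]) (t.subst [Term.port, t]))
    (ht2 : t.ports = 2) (htWF : t.WF ar) {X Y Z : Term σ}
    (hX : X.WF ar) (hY : Y.WF ar) (hZ : Z.WF ar) :
    LEquiv ar L (X.ports + Y.ports + Z.ports)
      (t.subst [t.subst [X, Y], Z]) (t.subst [X, t.subst [Y, Z]]) := by
  refine ⟨by rw [ports_pair ht2, ports_pair ht2], by rw [ports_pair ht2, ports_pair ht2]; omega, ?_⟩
  intro s hs hsWF l hlen hl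
  have hLHS : (t.subst [t.subst [X, Y], Z]).subst l
      = t.subst [t.subst [X.subst l, Y.subst (l.drop X.ports)],
          Z.subst (l.drop (X.ports + Y.ports))] := by
    rw [subst_pair (le_of_eq ht2), subst_pair (le_of_eq ht2), ports_pair ht2]
  have hRHS : (t.subst [X, t.subst [Y, Z]]).subst l
      = t.subst [X.subst l, t.subst [Y.subst (l.drop X.ports),
          Z.subst (l.drop (X.ports + Y.ports))]] := by
    rw [subst_pair (le_of_eq ht2), subst_pair (le_of_eq ht2), List.drop_drop]
    try (congr 3; omega)
  have hcl : ∀ k, ∀ x ∈ l.drop k, x.ports = 0 ∧ x.WF ar :=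
    fun k x hx => hl x (List.mem_of_mem_drop hx)
  have hxc : (X.subst l).ports = 0 ∧ (X.subst l).WF ar :=
    ⟨ports_subst_zero (by omega) (fun x hx => (hl x hx).1),
     wf_subst hX (fun x hx => (hl x hx).2)⟩
  have hyc : (Y.subst (l.drop X.ports)).ports = 0 ∧ (Y.subst (l.drop X.ports)).WF ar :=
    ⟨ports_subst_zero (by rw [List.length_drop]; omega) (fun x hx => (hcl _ x hx).1),
     wf_subst hY (fun x hx => (hcl _ x hx).2)⟩
  have hzc : (Z.subst (l.drop (X.ports + Y.ports))).ports = 0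
      ∧ (Z.subst (l.drop (X.ports + Y.ports))).WF ar :=
    ⟨ports_subst_zero (by rw [List.length_drop]; omega) (fun x hx => (hcl _ x hx).1),
     wf_subst hZ (fun x hx => (hcl _ x hx).2)⟩
  rw [hLHS, hRHS]
  exact rot3 hrot ht2 hxc hyc hzc hs hsWF

def combS (t : Term σ) : ℕ → Term σ
  | 0 => .port
  | 1 => .port
  | n + 2 => t.subst [combS t (n + 1), .port]

theorem combS_succ (p : ℕ) (hp : 1 ≤ p) : combS t (p + 1) = t.subst [combS t p, .port] := by
  match p, hp with
  | p' + 1, _ => rfl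

theorem combS_ports (ht2 : t.ports = 2) : ∀ n, 1 ≤ n → (combS t n).ports = n := by
  intro n
  induction n with
  | zero => omega
  | succ n ih =>
    intro _
    match n, ih with
    | 0, _ => simp [combS]
    | n' + 1, ih =>
      rw [combS_succ _ (by omega), ports_pair ht2, ih (by omega), ports_port]

theorem combS_wf (htWF : t.WF ar) : ∀ n, (combS t n).WF ar := by
  intro n
  induction n with
  | zero => exact WF_port ar
  | succ n ih =>
    match n, ih with
    | 0, _ => exact WF_port ar
    | n' + 1, ih =>
      rw [combS_succ _ (by omega)]
      refine wf_subst htWF ?_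
      rintro x hx
      simp only [List.mem_cons, List.mem_singleton, List.not_mem_nil, or_false] at hx
      rcases hx with rfl | rfl
      exacts [ih, WF_port ar]

theorem tstar_wf (htWF : t.WF ar) {u : Term σ} (h : TStar t u) : u.WF ar := by
  induction h with
  | base => exact WF_port ar
  | step hu hv ihu ihv =>
    refine wf_subst htWF ?_
    rintro x hx
    simp only [List.mem_cons, List.mem_singleton, List.not_mem_nil, or_false] at hx
    rcases hx with rfl | rfl
    exacts [ihu, ihv]

theorem tstar_ports_pos (ht2 : t.ports = 2) {u : Term σ} (h : TStar t u) : 1 ≤ u.ports := by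
  induction h with
  | base => simp
  | step hu hv ihu ihv => rw [ports_pair ht2]; omega

theorem comb_merge (hrot : LEquiv ar L 3 (t.subst [t, Term.port]) (t.subst [Term.port, t]))
    (ht2 : t.ports = 2) (htWF : t.WF ar) :
    ∀ q, 1 ≤ q → ∀ p, 1 ≤ p →
      LEquiv ar L (p + q) (t.subst [combS t p, combS t q]) (combS t (p + q)) := by
  intro q
  induction q with
  | zero => omega
  | succ q ih =>
    intro _ p hp
    match q, ih with
    | 0, _ =>
      rw [combS_succ p hp]
      exact lequiv_refl (by rw [ports_pair ht2, combS_ports ht2 p hp, combS_ports ht2 1 le_rfl])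
    | q' + 1, ih =>
      set r := q' + 1 with hr
      have hr1 : 1 ≤ r := by omega
      have h1 : LEquiv ar L (p + r + 1)
          (t.subst [combS t p, t.subst [combS t r, .port]])
          (t.subst [t.subst [combS t p, combS t r], .port]) := by
        refine lequiv_cast ?_ (lequiv_symm (rot_open hrot ht2 htWF (combS_wf htWF p)
          (combS_wf htWF r) (WF_port ar)))
        rw [combS_ports ht2 p hp, combS_ports ht2 r hr1, ports_port]
      have h2 : LEquiv ar L (p + r + 1)
          (t.subst [t.subst [combS t p, combS t r], .port])
          (t.subst [combS t (p + r), .port]) := by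
        have := lequiv_cong_left ht2 htWF (ih hr1 p hp) (WF_port ar)
        rwa [ports_port] at this
      have h3 : t.subst [combS t (p + r), .port] = combS t (p + r + 1) :=
        (combS_succ (p + r) (by omega)).symm
      rw [show q' + 1 + 1 = r + 1 from rfl, combS_succ r hr1]
      rw [h3] at h2
      exact lequiv_cast (by omega) (lequiv_trans h1 h2)

theorem tstar_equiv (hrot : LEquiv ar L 3 (t.subst [t, Term.port]) (t.subst [Term.port, t]))
    (ht2 : t.ports = 2) (htWF : t.WF ar) {u : Term σ} (h : TStar t u) :
    LEquiv ar L u.ports u (combS t u.ports) := by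
  induction h with
  | base =>
    simp only [ports_port]
    rw [show combS t 1 = (Term.port : Term σ) from rfl]
    exact lequiv_refl ports_port
  | @step u v hu hv ihu ihv =>
    have hup := tstar_ports_pos ht2 hu
    have hvp := tstar_ports_pos ht2 hv
    have s1 : LEquiv ar L (u.ports + v.ports) (t.subst [u, v])
        (t.subst [combS t u.ports, v]) := lequiv_cong_left ht2 htWF ihu (tstar_wf htWF hv)
    have s2 : LEquiv ar L (u.ports + v.ports) (t.subst [combS t u.ports, v])
        (t.subst [combS t u.ports, combS t v.ports]) :=
      lequiv_cong_right ht2 htWF (combS_wf htWF u.ports) (combS_ports ht2 u.ports hup) ihv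
    have s3 := comb_merge hrot ht2 htWF v.ports hvp u.ports hup
    have := lequiv_trans s1 (lequiv_trans s2 s3)
    rw [ports_pair ht2]
    exact this

section EvalP
variable {Q : Type} (δ : σ → List Q → Q) (q0 : Q)

mutual
def evalP : Term σ → List Q → Q × List Q
  | .port, l => (l.headD q0, l.tail)
  | .node a ts, l => let p := evalPL ts l; (δ a p.1, p.2)
def evalPL : List (Term σ) → List Q → List Q × List Q
  | [], l => ([], l)
  | t :: ts, l => let p := evalP t l; let q := evalPL ts p.2; (p.1 :: q.1, q.2)
end

mutual
theorem evalP_subst (u : Term σ) (l : List (Term σ)) :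
    (eval δ q0 (subst1 u l).1, (subst1 u l).2.map (eval δ q0))
      = evalP δ q0 u (l.map (eval δ q0)) := by
  match u with
  | .port => cases l <;> simp [subst1, evalP, eval]
  | .node a ts =>
    have h := evalPL_subst ts l
    simp only [subst1, evalP]
    rw [← h]
    rw [eval]
    simp [List.attach_map_val]
theorem evalPL_subst (ts : List (Term σ)) (l : List (Term σ)) :
    ((substL ts l).1.map (eval δ q0), (substL ts l).2.map (eval δ q0))
      = evalPL δ q0 ts (l.map (eval δ q0)) := by
  match ts with
  | [] => simp [substL, evalPL]
  | u :: ts' =>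
    have h1 := evalP_subst u l
    have h2 := evalPL_subst ts' (subst1 u l).2
    simp only [substL, evalPL, List.map_cons]
    rw [← h1, ← h2]
end

theorem eval_subst_pair (w u v : Term σ) :
    eval δ q0 (w.subst [u, v]) = (evalP δ q0 w [eval δ q0 u, eval δ q0 v]).1 := by
  have := congrArg Prod.fst (evalP_subst δ q0 w [u, v])
  simpa [Term.subst] using this

end EvalP
end Sep

namespace Sep
open Term

variable {Γ N : Type}

@[simp] theorem leafT_ports (g : Γ) : (leafT g).ports = 0 := by
  simp [leafT, sumP]

theorem leafT_wf (g : Γ) : (leafT g).WF arK := by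
  rw [leafT, WF_node]
  simp [arK]

def tDt (t : Term (KLetter Γ)) : DTree Γ N → Term (KLetter Γ)
  | .leaf g => leafT g
  | .node _ l r => t.subst [tDt t l, tDt t r]

def sDt (t : Term (KLetter Γ)) : DTree Γ N → Term (KLetter Γ)
  | .leaf _ => .port
  | .node _ l r => t.subst [sDt t l, sDt t r]

variable {t : Term (KLetter Γ)}

theorem kopD_tDt (ht2 : t.ports = 2) (htWF : t.WF arK) (htAC : OnlyAC t) :
    ∀ d : DTree Γ N, KopD d (tDt t d)
  | .leaf g => KopD.leaf g
  | .node A l r => KopD.node A l r t _ _ ht2 htWF htAC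
      (kopD_tDt ht2 htWF htAC l) (kopD_tDt ht2 htWF htAC r)

theorem sDt_tstar : ∀ d : DTree Γ N, TStar t (sDt t d)
  | .leaf _ => TStar.base
  | .node _ l r => TStar.step (sDt_tstar l) (sDt_tstar r)

theorem sDt_ports (ht2 : t.ports = 2) : ∀ d : DTree Γ N, (sDt t d).ports = d.yield.length
  | .leaf g => by simp [sDt, DTree.yield]
  | .node A l r => by
    rw [sDt, ports_pair ht2, sDt_ports ht2 l, sDt_ports ht2 r, DTree.yield,
      List.length_append]

theorem tDt_eq_sDt (ht2 : t.ports = 2) :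
    ∀ d : DTree Γ N, tDt t d = (sDt t d).subst (d.yield.map leafT)
  | .leaf g => by simp [tDt, sDt, DTree.yield]
  | .node A l r => by
    rw [tDt, sDt, DTree.yield, subst_pair (le_of_eq ht2), sDt_ports ht2 l, List.map_append]
    have h1 : (sDt t l).subst (l.yield.map leafT ++ r.yield.map leafT)
        = (sDt t l).subst (l.yield.map leafT) := by
      rw [← subst_take, sDt_ports ht2 l, ← List.length_map (as := l.yield) leafT, List.take_left]
    have h2 : (l.yield.map leafT ++ r.yield.map leafT).drop l.yield.length
        = r.yield.map leafT := by
      rw [← List.length_map (as := l.yield) leafT, List.drop_left]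
    rw [h1, h2, ← tDt_eq_sDt ht2 l, ← tDt_eq_sDt ht2 r]

theorem yield_ne_nil : ∀ d : DTree Γ N, d.yield ≠ []
  | .leaf g => by simp [DTree.yield]
  | .node _ l r => by
    simp only [DTree.yield]
    intro h
    exact yield_ne_nil l (List.append_eq_nil_iff.mp h).1

def combW (t : Term (KLetter Γ)) : List Γ → Term (KLetter Γ)
  | [] => .port
  | g :: w => w.foldl (fun acc g' => t.subst [acc, leafT g']) (leafT g)

theorem combW_append (g : Γ) (w : List Γ) (g' : Γ) :
    combW t (g :: (w ++ [g'])) = t.subst [combW t (g :: w), leafT g'] := by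
  simp [combW, List.foldl_append]

theorem combW_eq (ht2 : t.ports = 2) :
    ∀ w : List Γ, w ≠ [] → combW t w = (combS t w.length).subst (w.map leafT) := by
  intro w
  induction w using List.reverseRecOn with
  | nil => intro h; exact absurd rfl h
  | append_singleton w g' ih =>
    intro _
    match w with
    | [] => simp [combW, combS]
    | g :: w' =>
      rw [List.cons_append, combW_append]
      have hlen : (g :: w').length ≥ 1 := by simp
      rw [ih (by simp), show g :: (w' ++ [g']) = (g :: w') ++ [g'] from rfl]
      have hL : ((g :: w') ++ [g']).length = (g :: w').length + 1 := by simp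
      rw [hL, combS_succ _ hlen, subst_pair (le_of_eq ht2),
        combS_ports ht2 _ hlen, List.map_append]
      have h1 : (combS t (g :: w').length).subst ((g :: w').map leafT ++ [g'].map leafT)
          = (combS t (g :: w').length).subst ((g :: w').map leafT) := by
        rw [← subst_take, combS_ports ht2 _ hlen, ← List.length_map (as := g :: w') leafT,
          List.take_left]
      have h2 : ((g :: w').map leafT ++ [g'].map leafT).drop (g :: w').length
          = [leafT g'] := by
        rw [← List.length_map (as := g :: w') leafT, List.drop_left]
        rfl
      rw [h1, h2]
      rfl

theorem combW_ports (ht2 : t.ports = 2) (w : List Γ) (hw : w ≠ []) :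
    (combW t w).ports = 0 := by
  rw [combW_eq ht2 w hw]
  refine ports_subst_zero ?_ ?_
  · rw [combS_ports ht2 _ (by cases w <;> simp_all), List.length_map]
  · rintro x hx
    simp only [List.mem_map] at hx
    obtain ⟨g, _, rfl⟩ := hx
    simp

theorem combW_wf (ht2 : t.ports = 2) (htWF : t.WF arK) (w : List Γ) (hw : w ≠ []) :
    (combW t w).WF arK := by
  rw [combW_eq ht2 w hw]
  refine wf_subst (combS_wf htWF _) ?_
  rintro x hx
  simp only [List.mem_map] at hx
  obtain ⟨g, _, rfl⟩ := hx
  exact leafT_wf g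

end Sep

/-- Assuming the Rotation Lemma for a class `Walk` of tree languages (those recognized by
deterministic tree-walking automata) and that every such language is regular:
if `kop(G)` and `kop(H)` can be separated by a language in `Walk`, then `L(G)` and `L(H)`
can be separated by a regular word language. -/
theorem word_separation_of_kop_separation {Γ N M : Type} (G : CNF Γ N) (H : CNF Γ M)
    (Walk : Set (Term (KLetter Γ)) → Prop)
    (hrot : ∀ L : Set (Term (KLetter Γ)), Walk L →
      ∃ t : Term (KLetter Γ), OnlyAC t ∧ t.ports = 2 ∧ t.WF arK ∧
        LEquiv arK L 3 (t.subst [t, Term.port]) (t.subst [Term.port, t]))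
    (hreg : ∀ L : Set (Term (KLetter Γ)), Walk L → RegularTree arK L)
    (hsep : ∃ L : Set (Term (KLetter Γ)), Walk L ∧ kopLang G ⊆ L ∧ L ∩ kopLang H = ∅) :
    ∃ K : Set (List Γ), RegularWord K ∧ G.lang ⊆ K ∧ K ∩ H.lang = ∅ := by
  classical
  obtain ⟨Lw, hW, hGL, hLH⟩ := hsep
  obtain ⟨t, htAC, ht2, htWF, hrotL⟩ := hrot Lw hW
  obtain ⟨Q, hQ, δ, q0, F, hLdef⟩ := hreg Lw hW
  haveI : Finite Q := hQ
  haveI : Fintype Q := Fintype.ofFinite Q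
  let Md : DFA Γ (Option Q) :=
    { step := fun x g =>
        match x with
        | none => some (Term.eval δ q0 (leafT g))
        | some q => some ((Sep.evalP δ q0 t [q, Term.eval δ q0 (leafT g)]).1)
      start := none
      accept := {x | ∃ q ∈ F, x = some q} }
  have hfold : ∀ (w : List Γ) (u : Term (KLetter Γ)),
      Md.evalFrom (some (Term.eval δ q0 u)) w
        = some (Term.eval δ q0 (w.foldl (fun acc g => t.subst [acc, leafT g]) u)) := by
    intro w
    induction w with
    | nil => intro u; rfl
    | cons g w ihw =>
      intro u
      have h1 : Md.evalFrom (some (Term.eval δ q0 u)) (g :: w)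
          = Md.evalFrom (some ((Sep.evalP δ q0 t [Term.eval δ q0 u, Term.eval δ q0 (leafT g)]).1)) w := rfl
      rw [h1, ← Sep.eval_subst_pair δ q0 t u (leafT g), ihw]
      rfl
  have hrun : ∀ (g : Γ) (w : List Γ),
      Md.evalFrom none (g :: w) = some (Term.eval δ q0 (Sep.combW t (g :: w))) := by
    intro g w
    have h1 : Md.evalFrom none (g :: w) = Md.evalFrom (some (Term.eval δ q0 (leafT g))) w := rfl
    rw [h1, hfold w (leafT g)]
    rfl
  have hmem : ∀ w : List Γ, w ≠ [] → (w ∈ Md.accepts ↔ Sep.combW t w ∈ Lw) := by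
    intro w hw
    match w with
    | g :: w' =>
      rw [DFA.mem_accepts]
      have : Md.eval (g :: w') = some (Term.eval δ q0 (Sep.combW t (g :: w'))) := hrun g w'
      rw [this]
      constructor
      · rintro ⟨q, hqF, hq⟩
        rw [hLdef]
        refine ⟨Sep.combW_ports ht2 _ (by simp), Sep.combW_wf ht2 htWF _ (by simp), ?_⟩
        simp only [Option.some_inj] at hq
        rwa [hq]
      · intro hL
        rw [hLdef] at hL
        exact ⟨_, hL.2.2, rfl⟩
  have hbridge : ∀ (N' : Type) (d : DTree Γ N'),
      (Sep.combW t d.yield ∈ Lw ↔ Sep.tDt t d ∈ Lw) := by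
    intro N' d
    obtain ⟨_, _, hiff⟩ := Sep.tstar_equiv hrotL ht2 htWF (Sep.sDt_tstar (t := t) d)
    have hp := Sep.sDt_ports ht2 d
    have key := hiff Term.port Term.ports_port (Term.WF_port arK) (d.yield.map leafT)
      (by rw [List.length_map, hp])
      (by
        rintro x hx
        simp only [List.mem_map] at hx
        obtain ⟨g, _, rfl⟩ := hx
        exact ⟨Sep.leafT_ports g, Sep.leafT_wf g⟩)
    have e1 : ∀ x : Term (KLetter Γ), Term.port.subst [x] = x := fun x => rfl
    rw [e1, e1, ← Sep.tDt_eq_sDt ht2 d, hp,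
      ← Sep.combW_eq ht2 d.yield (Sep.yield_ne_nil d)] at key
    exact key.symm
  refine ⟨Md.accepts, ⟨Option Q, inferInstance, Md, rfl⟩, ?_, ?_⟩
  · rintro w ⟨d, hd, rfl⟩
    have h1 : Sep.tDt t d ∈ Lw := hGL ⟨d, hd, Sep.kopD_tDt ht2 htWF htAC d⟩
    exact (hmem d.yield (Sep.yield_ne_nil d)).mpr ((hbridge N d).mpr h1)
  · apply Set.eq_empty_iff_forall_notMem.mpr
    rintro w ⟨hwK, d, hd, rfl⟩
    have h2 : Sep.combW t d.yield ∈ Lw := (hmem _ (Sep.yield_ne_nil d)).mp hwK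
    have h1 : Sep.tDt t d ∈ Lw := (hbridge M d).mp h2
    have : Sep.tDt t d ∈ Lw ∩ kopLang H := ⟨h1, d, hd, Sep.kopD_tDt ht2 htWF htAC d⟩
    rw [hLH] at this
    exact this
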